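/- Let F be a finite field with q elements, let n ≥ 1, and let g ∈ SL_n(F) be a unipotent element, i.e. (g - 1)^n = 0. If q is even, or if n is odd, then g is real in SL_n(F), i.e. g is conjugate to g⁻¹ by an element of SL_n(F). -/

import Mathlib

open Polynomial

set_option maxHeartbeats 1000000 in
set_option synthInstance.maxHeartbeats 100000 in
/-- On `K[X]⧸(q^e)` where `mk X` is unipotent, there is a `K`-linear involution
conjugating multiplication by `X` to its inverse. -/
lemma exists_invol (K : Type*) [Field K] (q : K[X]) (hq : Irreducible q) (e N : ℕ)
    (hx : ((Ideal.Quotient.mk (Ideal.span {q ^ e})) X - 1) ^ N = 0) :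
    ∃ σ : (K[X] ⧸ Ideal.span {q ^ e}) →ₗ[K] (K[X] ⧸ Ideal.span {q ^ e}),
      (∀ r, σ (σ r) = r) ∧ (∀ r, (X : K[X]) • σ ((X : K[X]) • r) = σ r) := by
  have hu : IsUnit ((Ideal.Quotient.mk (Ideal.span {q ^ e})) X) := by
    have h1 : IsNilpotent ((Ideal.Quotient.mk (Ideal.span {q ^ e})) X - 1) := ⟨N, hx⟩
    have := h1.isUnit_add_one
    rwa [sub_add_cancel] at this
  obtain ⟨u, husp⟩ := hu
  set y : K[X] ⧸ Ideal.span {q ^ e} := ((u⁻¹ : _ˣ) : K[X] ⧸ Ideal.span {q ^ e}) with hydef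
  have hxy : (Ideal.Quotient.mk (Ideal.span {q ^ e})) X * y = 1 := by
    rw [← husp, hydef, Units.mul_inv]
  -- key : aeval y kills the ideal
  have key : ∀ a ∈ Ideal.span {q ^ e}, (aeval y) a = 0 := by
    intro a ha
    rcases subsingleton_or_nontrivial (K[X] ⧸ Ideal.span {q ^ e}) with hR | hR
    · exact Subsingleton.elim _ _
    haveI := hR
    have hqe0 : Ideal.Quotient.mk (Ideal.span {q ^ e}) (q ^ e) = 0 := by
      rw [Ideal.Quotient.eq_zero_iff_mem]
      exact Ideal.mem_span_singleton_self _
    have he : e ≠ 0 := by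
      rintro rfl
      rw [pow_zero, map_one] at hqe0
      exact one_ne_zero (α := K[X] ⧸ Ideal.span {(q : K[X]) ^ (0:ℕ)}) hqe0
    have hdvd : q ^ e ∣ (X - 1 : K[X]) ^ N := by
      rw [← Ideal.mem_span_singleton, ← Ideal.Quotient.eq_zero_iff_mem, map_pow, map_sub,
        map_one]
      exact hx
    have hqX : q ∣ (X - 1 : K[X]) :=
      hq.prime.dvd_of_dvd_pow (dvd_trans (dvd_pow_self q he) hdvd)
    have hirr : Irreducible (X - 1 : K[X]) := by
      have := Polynomial.irreducible_X_sub_C (1 : K)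
      rwa [map_one] at this
    obtain ⟨c, hc⟩ := hq.associated_of_dvd hirr hqX
    have hx1e : ((Ideal.Quotient.mk (Ideal.span {q ^ e})) (X - 1 : K[X])) ^ e = 0 := by
      rw [← map_pow, ← hc, mul_pow, map_mul, hqe0, zero_mul]
    have hy1e : (y - 1) ^ e = 0 := by
      have h2 : y - 1 = -1 * (y * ((Ideal.Quotient.mk (Ideal.span {q ^ e})) X - 1)) := by
        have h3 : y * (Ideal.Quotient.mk (Ideal.span {q ^ e})) X = 1 := by
          rw [mul_comm]; exact hxy
        ring_nf
        rw [mul_comm y, hxy]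
        ring
      rw [h2, mul_pow, mul_pow]
      have h4 : ((Ideal.Quotient.mk (Ideal.span {q ^ e})) X - 1) ^ e = 0 := by
        have := hx1e
        rwa [map_sub, map_one] at this
      rw [h4, mul_zero, mul_zero]
    have haq : (aeval y) (q ^ e) = 0 := by
      have h1 : (aeval y) (q ^ e) * (aeval y) ((c : K[X]) ^ e) = 0 := by
        rw [← map_mul, ← mul_pow, hc, map_pow, map_sub, aeval_X, map_one, hy1e]
      have hcu : IsUnit ((aeval y) ((c : K[X]) ^ e)) :=
        IsUnit.map _ (IsUnit.pow e c.isUnit)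
      exact (IsUnit.mul_left_eq_zero hcu).mp h1
    rw [Ideal.mem_span_singleton] at ha
    obtain ⟨b, rfl⟩ := ha
    rw [map_mul, haq, zero_mul]
  -- define τ
  set τ := Ideal.Quotient.liftₐ (Ideal.span {q ^ e}) (aeval y) key with hτdef
  have hmk : ∀ f : K[X], τ (Ideal.Quotient.mk (Ideal.span {q ^ e}) f) = aeval y f := by
    intro f
    rw [hτdef, Ideal.Quotient.liftₐ_apply]
    rfl
  have hτx : τ ((Ideal.Quotient.mk (Ideal.span {q ^ e})) X) = y := by rw [hmk, aeval_X]
  have hτy : τ y = (Ideal.Quotient.mk (Ideal.span {q ^ e})) X := by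
    have h1 : τ ((Ideal.Quotient.mk (Ideal.span {q ^ e})) X) * τ y = 1 := by
      rw [← map_mul, hxy, map_one]
    calc τ y = (Ideal.Quotient.mk (Ideal.span {q ^ e})) X * (y * τ y) := by
          rw [← mul_assoc, hxy, one_mul]
    _ = (Ideal.Quotient.mk (Ideal.span {q ^ e})) X *
          (τ ((Ideal.Quotient.mk (Ideal.span {q ^ e})) X) * τ y) := by rw [hτx]
    _ = (Ideal.Quotient.mk (Ideal.span {q ^ e})) X := by rw [h1, mul_one]
  have hinvol : ∀ r, τ (τ r) = r := by
    have hcomp : τ.comp τ = AlgHom.id K _ := by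
      apply Ideal.Quotient.algHom_ext
      apply Polynomial.algHom_ext
      show τ (τ ((Ideal.Quotient.mk (Ideal.span {q ^ e})) X)) = _
      rw [hτx, hτy]
      rfl
    intro r
    have := DFunLike.congr_fun hcomp r
    simpa using this
  refine ⟨τ.toLinearMap, hinvol, ?_⟩
  intro r
  have hsmul : ∀ s : K[X] ⧸ Ideal.span {q ^ e},
      (X : K[X]) • s = (Ideal.Quotient.mk (Ideal.span {q ^ e})) X * s := by
    intro s
    obtain ⟨f, rfl⟩ := Ideal.Quotient.mk_surjective (I := Ideal.span {q ^ e}) s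
    rw [← map_mul]
    exact (Submodule.Quotient.mk_smul (Ideal.span {q ^ e}) X f).symm
  simp only [AlgHom.toLinearMap_apply, hsmul]
  rw [map_mul, hτx, ← mul_assoc, hxy, one_mul]

set_option maxHeartbeats 1000000 in
lemma exists_conj_invol (F : Type*) [Field F] (n : ℕ)
    (a : ((Fin n → F) →ₗ[F] (Fin n → F))) (ha : (a - 1) ^ n = 0) :
    ∃ φ : (Fin n → F) →ₗ[F] (Fin n → F),
      (∀ v, φ (φ v) = v) ∧ (∀ v, a (φ (a v)) = φ v) := by
  classical
  set M := Module.AEval' a with hM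
  have hann : ∀ m : M, ((X - 1 : F[X]) ^ n) • m = 0 := by
    intro m
    obtain ⟨v, rfl⟩ := (Module.AEval'.of a).surjective m
    rw [← Module.AEval.of_aeval_smul]
    have h0 : aeval a ((X - 1 : F[X]) ^ n) = 0 := by
      rw [map_pow, map_sub, aeval_X, map_one, ha]
    rw [h0]
    simp
  have htor : Module.IsTorsion F[X] M := by
    intro m
    refine ⟨⟨(X - 1 : F[X]) ^ n, ?_⟩, hann m⟩
    refine mem_nonZeroDivisors_of_ne_zero (pow_ne_zero _ ?_)
    have hm : Polynomial.Monic (X - 1 : F[X]) := by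
      have := Polynomial.monic_X_sub_C (1 : F)
      rwa [map_one] at this
    exact hm.ne_zero
  obtain ⟨ι, fι, p, hp, e, ⟨π⟩⟩ := Module.equiv_directSum_of_isTorsion htor
  haveI := fι
  -- move to Pi world
  set E : M ≃ₗ[F[X]] (∀ i, F[X] ⧸ Ideal.span {p i ^ e i}) :=
    π.trans (DirectSum.linearEquivFunOnFintype F[X] ι (fun i => F[X] ⧸ Ideal.span {p i ^ e i}))
    with hE
  have hannP : ∀ w : (∀ i, F[X] ⧸ Ideal.span {p i ^ e i}), ((X - 1 : F[X]) ^ n) • w = 0 := by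
    intro w
    calc ((X - 1 : F[X]) ^ n) • w = E (((X - 1 : F[X]) ^ n) • E.symm w) := by
          rw [map_smul, E.apply_symm_apply]
    _ = 0 := by rw [hann, map_zero]
  -- componentwise unipotency
  have hcomp : ∀ i, ((Ideal.Quotient.mk (Ideal.span {p i ^ e i})) X - 1) ^ n = 0 := by
    intro i
    have h1 := congrArg (fun w => w i)
      (hannP (Pi.single (M := fun j => F[X] ⧸ Ideal.span {p j ^ e j}) i 1))
    simp only [Pi.smul_apply, Pi.single_eq_same, Pi.zero_apply] at h1
    have h2 : ((X - 1 : F[X]) ^ n) • (1 : F[X] ⧸ Ideal.span {p i ^ e i})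
        = ((Ideal.Quotient.mk (Ideal.span {p i ^ e i})) X - 1) ^ n := by
      have h3 : (1 : F[X] ⧸ Ideal.span {p i ^ e i})
          = Ideal.Quotient.mk (Ideal.span {p i ^ e i}) 1 := rfl
      have h4 : ((X - 1 : F[X]) ^ n) • (Ideal.Quotient.mk (Ideal.span {p i ^ e i}) 1)
          = Ideal.Quotient.mk (Ideal.span {p i ^ e i}) (((X - 1 : F[X]) ^ n) * 1) :=
        (Submodule.Quotient.mk_smul _ _ _).symm
      rw [h3, h4, mul_one, map_pow, map_sub, map_one]
    rw [h2] at h1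
    exact h1
  -- componentwise involutions
  choose σ hσ1 hσ2 using fun i => exists_invol F (p i) (hp i) (e i) n (hcomp i)
  -- assemble
  set D : (∀ i, F[X] ⧸ Ideal.span {p i ^ e i}) →ₗ[F] (∀ i, F[X] ⧸ Ideal.span {p i ^ e i}) :=
    LinearMap.pi (fun i => (σ i) ∘ₗ LinearMap.proj i) with hD
  have hDapp : ∀ w i, D w i = σ i (w i) := fun w i => rfl
  set ES := E.restrictScalars F with hES
  set φM : M →ₗ[F] M := (ES.symm.toLinearMap) ∘ₗ D ∘ₗ ES.toLinearMap with hφM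
  have hφM1 : ∀ m, φM (φM m) = m := by
    intro m
    simp only [hφM, LinearMap.comp_apply, LinearEquiv.coe_toLinearMap,
      LinearEquiv.apply_symm_apply]
    have : ∀ w, D (D w) = w := by
      intro w; funext i; rw [hDapp, hDapp, hσ1]
    rw [this, LinearEquiv.symm_apply_apply]
  have hEsmul : ∀ (r : F[X]) (m : M), ES (r • m) = r • ES m := fun r m => map_smul E r m
  have hEs2 : ∀ (r : F[X]) (z : (∀ i, F[X] ⧸ Ideal.span {p i ^ e i})),
      ES.symm (r • z) = r • ES.symm z := fun r z => map_smul E.symm r z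
  have hDX : ∀ w, (X : F[X]) • D ((X : F[X]) • w) = D w := by
    intro w; funext i
    simp only [Pi.smul_apply, hDapp]
    exact hσ2 i (w i)
  have hφM2 : ∀ m : M, (X : F[X]) • (φM ((X : F[X]) • m)) = φM m := by
    intro m
    simp only [hφM, LinearMap.comp_apply, LinearEquiv.coe_toLinearMap]
    rw [hEsmul, ← hEs2]
    congr 1
    exact hDX (ES m)
  -- descend to V
  set ofa := Module.AEval'.of a with hofa
  refine ⟨(ofa.symm.toLinearMap) ∘ₗ φM ∘ₗ ofa.toLinearMap, ?_, ?_⟩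
  · intro v
    simp only [LinearMap.comp_apply, LinearEquiv.coe_toLinearMap,
      LinearEquiv.apply_symm_apply]
    rw [hφM1, LinearEquiv.symm_apply_apply]
  · intro v
    simp only [LinearMap.comp_apply, LinearEquiv.coe_toLinearMap]
    have hX : ∀ w : Fin n → F, ofa (a w) = (X : F[X]) • ofa w := by
      intro w
      exact (Module.AEval'.X_smul_of a w).symm
    have hXs : ∀ m : M, a (ofa.symm m) = ofa.symm ((X : F[X]) • m) := by
      intro m
      apply ofa.injective
      rw [hX (ofa.symm m), ofa.apply_symm_apply, ofa.apply_symm_apply]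
    rw [hX v, hXs, ← hφM2 (ofa v)]


-- char 2 helper
lemma neg_one_eq_one_of_even_card (F : Type*) [Field F] [Fintype F]
    (h : Even (Fintype.card F)) : (-1 : F) = 1 := by
  obtain ⟨k, hp, hcard⟩ := FiniteField.card F (ringChar F)
  have h2 : (2 : ℕ) ∣ ringChar F ^ (k : ℕ) := by
    rw [← hcard]; exact h.two_dvd
  have h3 : (2 : ℕ) ∣ ringChar F := Nat.Prime.dvd_of_dvd_pow Nat.prime_two h2
  have h4 : ringChar F = 2 := ((Nat.prime_dvd_prime_iff_eq Nat.prime_two hp).mp h3).symm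
  haveI : CharP F 2 := by rw [← h4]; exact ringChar.charP F
  exact CharTwo.neg_eq 1

/-- A unipotent element of `SL_n(F)`, for `F` a finite field with `q` elements, is real
in `SL_n(F)` provided `q` is even or `n` is odd. -/
theorem unipotent_real_in_SL
    (F : Type*) [Field F] [Fintype F] (n : ℕ) (hn : 1 ≤ n)
    (g : Matrix.SpecialLinearGroup (Fin n) F)
    (hunip : ((g : Matrix (Fin n) (Fin n) F) - 1) ^ n = 0)
    (h : Even (Fintype.card F) ∨ Odd n) :
    IsConj g g⁻¹ := by
  classical
  set G : Matrix (Fin n) (Fin n) F := (g : Matrix (Fin n) (Fin n) F) with hG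
  have ha : ((Matrix.toLin' G) - 1) ^ n = 0 := by
    have h1 : Matrix.toLin' G = Matrix.toLinAlgEquiv' G := rfl
    rw [h1, ← map_one (Matrix.toLinAlgEquiv' (R := F) (n := Fin n)), ← map_sub, ← map_pow,
      hunip, map_zero]
  obtain ⟨φ, hφ1, hφ2⟩ := exists_conj_invol F n (Matrix.toLin' G) ha
  set C : Matrix (Fin n) (Fin n) F := LinearMap.toMatrix' φ with hC
  have hCC : C * C = 1 := by
    rw [hC, ← LinearMap.toMatrix'_comp, ← LinearMap.toMatrix'_id (n := Fin n) (R := F)]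
    congr 1
    ext v i
    simp [hφ1]
  have hGCG : G * C * G = C := by
    have h2 : (Matrix.toLin' G) ∘ₗ (φ ∘ₗ (Matrix.toLin' G)) = φ := by
      apply LinearMap.ext
      intro v
      exact hφ2 v
    calc G * C * G = G * (C * G) := by rw [mul_assoc]
    _ = LinearMap.toMatrix' ((Matrix.toLin' G) ∘ₗ (φ ∘ₗ (Matrix.toLin' G))) := by
        rw [LinearMap.toMatrix'_comp, LinearMap.toMatrix'_comp, LinearMap.toMatrix'_toLin', hC]
    _ = C := by rw [h2, hC]
  have hdet : C.det = 1 ∨ C.det = -1 := by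
    have := congrArg Matrix.det hCC
    rw [Matrix.det_mul, Matrix.det_one] at this
    exact mul_self_eq_one_iff.mp this
  -- choose the matrix with det 1
  obtain ⟨C', hdet', hrel'⟩ : ∃ C' : Matrix (Fin n) (Fin n) F, C'.det = 1 ∧ G * C' * G = C' := by
    rcases hdet with hd | hd
    · exact ⟨C, hd, hGCG⟩
    rcases h with hq | hodd
    · refine ⟨C, ?_, hGCG⟩
      rw [hd, neg_one_eq_one_of_even_card F hq]
    · refine ⟨-C, ?_, by rw [Matrix.mul_neg, Matrix.neg_mul, hGCG]⟩
      rw [Matrix.det_neg, hd, Fintype.card_fin, hodd.neg_one_pow]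
      ring
  -- conclude
  set t : Matrix.SpecialLinearGroup (Fin n) F := ⟨C', hdet'⟩ with ht
  have hts : g * t * g = t := by
    apply Subtype.ext
    simpa using hrel'
  rw [isConj_iff]
  refine ⟨t⁻¹, ?_⟩
  have h1 : g * t = t * g⁻¹ := by
    calc g * t = (g * t * g) * g⁻¹ := by group
    _ = t * g⁻¹ := by rw [hts]
  calc t⁻¹ * g * (t⁻¹)⁻¹ = t⁻¹ * (g * t) := by group
  _ = t⁻¹ * (t * g⁻¹) := by rw [h1]
  _ = g⁻¹ := by group
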